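/- Let α : I → ℝ^{m+1} be a C² regular curve parametrized by arc-length equipped with a rotation minimizing frame {t, n₁, …, n_m} satisfying t' = Σᵢ κᵢnᵢ and nᵢ' = −κᵢt. Then α lies on a sphere of radius r if and only if its normal development curve (κ₁(s), …, κ_m(s)) lies on a hyperplane not passing through the origin, and the distance of this hyperplane from the origin is 1/r. -/

import Mathlib

noncomputable def edot {n : ℕ} (x y : Fin n → ℝ) : ℝ := ∑ i, x i * y i

lemma edot_comm {N : ℕ} (x y : Fin N → ℝ) : edot x y = edot y x := by
  simp [edot, mul_comm]

lemma edot_smul_left {N : ℕ} (c : ℝ) (x y : Fin N → ℝ) :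
    edot (c • x) y = c * edot x y := by
  simp [edot, Finset.mul_sum, mul_assoc]

lemma edot_sum_left {N : ℕ} {ι : Type*} (s : Finset ι) (f : ι → Fin N → ℝ)
    (y : Fin N → ℝ) : edot (∑ i ∈ s, f i) y = ∑ i ∈ s, edot (f i) y := by
  simp only [edot, Finset.sum_apply, Finset.sum_mul]
  exact Finset.sum_comm

lemma edot_hasDerivAt {N : ℕ} {f g : ℝ → Fin N → ℝ} {f' g' : Fin N → ℝ} {s : ℝ}
    (hf : HasDerivAt f f' s) (hg : HasDerivAt g g' s) :
    HasDerivAt (fun u => edot (f u) (g u)) (edot f' (g s) + edot (f s) g') s := by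
  have hfi := hasDerivAt_pi.mp hf
  have hgi := hasDerivAt_pi.mp hg
  have h : HasDerivAt (fun u => ∑ i, f u i * g u i)
      (∑ i, (f' i * g s i + f s i * g' i)) s :=
    HasDerivAt.fun_sum fun i _ => (hfi i).mul (hgi i)
  simpa [edot, Finset.sum_add_distrib] using h

lemma parseval {N : ℕ} (b : Fin N → Fin N → ℝ)
    (hb : ∀ k l, edot (b k) (b l) = if k = l then 1 else 0) (v : Fin N → ℝ) :
    ∑ k, (edot (b k) v) ^ 2 = edot v v := by
  set M : Matrix (Fin N) (Fin N) ℝ := Matrix.of b with hM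
  have hMMT : M * M.transpose = 1 := by
    ext k l
    simpa [hM, Matrix.mul_apply, Matrix.one_apply, edot] using hb k l
  have hTM : M.transpose * M = 1 := mul_eq_one_comm.mp hMMT
  have hcomp : ∀ i j, (∑ k, b k i * b k j) = if i = j then 1 else 0 := by
    intro i j
    have := congrFun (congrFun hTM i) j
    simpa [hM, Matrix.mul_apply, Matrix.one_apply, mul_comm] using this
  calc ∑ k, (edot (b k) v) ^ 2
      = ∑ k, ∑ i, ∑ j, (b k i * v i) * (b k j * v j) := by
        simp [edot, sq, Finset.sum_mul_sum]
    _ = ∑ i, ∑ j, ∑ k, (b k i * v i) * (b k j * v j) := by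
        rw [Finset.sum_comm]
        exact Finset.sum_congr rfl fun i _ => Finset.sum_comm
    _ = ∑ i, ∑ j, (v i * v j) * ∑ k, b k i * b k j := by
        refine Finset.sum_congr rfl fun i _ => Finset.sum_congr rfl fun j _ => ?_
        rw [Finset.mul_sum]
        exact Finset.sum_congr rfl fun k _ => by ring
    _ = edot v v := by
        simp [hcomp, edot, mul_ite, Finset.sum_ite_eq, mul_comm]

/-- A unit-speed curve in `ℝ^{m+1}` with a rotation minimizing frame `{t, n₁, …, n_m}`
lies on a sphere of radius `r` iff its normal development `(κ₁, …, κ_m)` lies on a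
hyperplane not through the origin whose distance from the origin is `1/r`
(after rescaling, `Σ aᵢκᵢ + 1 = 0` with `Σ aᵢ² = r²`). -/
theorem stmt2 {m : ℕ} (α : ℝ → Fin (m + 1) → ℝ) (t : ℝ → Fin (m + 1) → ℝ)
    (n : Fin m → ℝ → Fin (m + 1) → ℝ) (κ : Fin m → ℝ → ℝ) (r : ℝ) (hr : 0 < r)
    (hα : ContDiff ℝ 2 α)
    (ht : ∀ s, t s = deriv α s)
    (htt : ∀ s, edot (t s) (t s) = 1)
    (hnn : ∀ i j s, edot (n i s) (n j s) = if i = j then 1 else 0)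
    (htn : ∀ i s, edot (t s) (n i s) = 0)
    (hdiffn : ∀ i, Differentiable ℝ (n i))
    (hdt : ∀ s, deriv t s = ∑ i, κ i s • n i s)
    (hdn : ∀ i s, deriv (n i) s = -(κ i s) • t s) :
    (∃ P : Fin (m + 1) → ℝ, ∀ s, edot (α s - P) (α s - P) = r ^ 2) ↔
      ∃ a : Fin m → ℝ, (∀ s, (∑ i, a i * κ i s) + 1 = 0) ∧ (∑ i, (a i) ^ 2) = r ^ 2 := by
  -- basic differentiability facts
  have hdα : Differentiable ℝ α := hα.differentiable (by norm_num)
  have htfun : t = deriv α := funext ht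
  have hdiff_t : Differentiable ℝ t := by
    rw [htfun]
    have h2 : ContDiff ℝ ((1 : WithTop ℕ∞) + 1) α := by
      convert hα using 2 <;> norm_num
    exact ((contDiff_succ_iff_deriv.mp h2).2.2).differentiable (by norm_num)
  have hα' : ∀ s, HasDerivAt α (t s) s := fun s => ht s ▸ (hdα s).hasDerivAt
  have ht' : ∀ s, HasDerivAt t (∑ i, κ i s • n i s) s := fun s =>
    hdt s ▸ (hdiff_t s).hasDerivAt
  have hn' : ∀ i s, HasDerivAt (n i) (-(κ i s) • t s) s := fun i s =>
    hdn i s ▸ (hdiffn i s).hasDerivAt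
  constructor
  · rintro ⟨P, hP⟩
    set v : ℝ → Fin (m + 1) → ℝ := fun s => α s - P with hvdef
    have hv' : ∀ s, HasDerivAt v (t s) s := fun s => (hα' s).sub_const P
    -- Step 1: t ⟂ v
    have htv : ∀ s, edot (t s) (v s) = 0 := by
      intro s
      have h1 : HasDerivAt (fun u => edot (v u) (v u))
          (edot (t s) (v s) + edot (v s) (t s)) s :=
        edot_hasDerivAt (hv' s) (hv' s)
      have h2 : HasDerivAt (fun u => edot (v u) (v u)) 0 s := by
        have : (fun u => edot (v u) (v u)) = fun _ => r ^ 2 := funext hP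
        rw [this]; exact hasDerivAt_const s _
      have h3 := h1.unique h2
      rw [edot_comm (v s) (t s)] at h3
      linarith
    -- Step 2: edot (n i) v is constant
    set A : Fin m → ℝ → ℝ := fun i s => edot (n i s) (v s) with hAdef
    have hA' : ∀ i s, HasDerivAt (A i) 0 s := by
      intro i s
      have h1 := edot_hasDerivAt (hn' i s) (hv' s)
      rw [edot_smul_left, htv s, mul_zero, zero_add,
        edot_comm (n i s) (t s), htn i s] at h1
      exact h1
    have hAconst : ∀ i s, A i s = A i 0 := fun i s =>
      is_const_of_deriv_eq_zero (fun u => (hA' i u).differentiableAt)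
        (fun u => (hA' i u).deriv) s 0
    refine ⟨fun i => A i 0, ?_, ?_⟩
    · -- hyperplane equation
      intro s
      have h1 : HasDerivAt (fun u => edot (t u) (v u))
          (edot (∑ i, κ i s • n i s) (v s) + edot (t s) (t s)) s :=
        edot_hasDerivAt (ht' s) (hv' s)
      have h2 : HasDerivAt (fun u => edot (t u) (v u)) 0 s := by
        have : (fun u => edot (t u) (v u)) = fun _ => 0 := funext htv
        rw [this]; exact hasDerivAt_const s _
      have h3 := h1.unique h2
      rw [edot_sum_left, htt s] at h3
      have h4 : ∀ i, edot (κ i s • n i s) (v s) = A i 0 * κ i s := by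
        intro i
        rw [edot_smul_left, ← hAconst i s, hAdef, mul_comm]
      rw [Finset.sum_congr rfl fun i _ => h4 i] at h3
      linarith
    · -- radius
      have hb : ∀ k l, edot ((Fin.cons (t 0) fun i => n i 0 : Fin (m+1) → _) k)
          ((Fin.cons (t 0) fun i => n i 0 : Fin (m+1) → _) l) = if k = l then 1 else 0 := by
        intro k l
        refine Fin.cases ?_ ?_ k <;> [skip; intro i] <;> refine Fin.cases ?_ ?_ l <;>
          try intro j
        · simpa using htt 0
        · simpa [(Fin.succ_ne_zero j).symm] using htn j 0
        · simpa [edot_comm] using htn i 0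
        · simpa [Fin.succ_inj] using hnn i j 0
      have hp := parseval _ hb (v 0)
      rw [Fin.sum_univ_succ] at hp
      simp only [Fin.cons_zero, Fin.cons_succ] at hp
      rw [htv 0, hP 0] at hp
      simpa [hAdef] using hp
  · rintro ⟨a, ha1, ha2⟩
    set f : ℝ → Fin (m + 1) → ℝ := fun s => α s - ∑ i, a i • n i s with hfdef
    have hf' : ∀ s, HasDerivAt f 0 s := by
      intro s
      have h1 : HasDerivAt (fun u => ∑ i, a i • n i u)
          (∑ i, a i • (-(κ i s) • t s)) s :=
        HasDerivAt.fun_sum fun i _ => (hn' i s).const_smul (a i)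
      have h2 := (hα' s).sub h1
      have e1 : (∑ i, a i • (-(κ i s) • t s)) = (∑ i, -(a i * κ i s)) • t s := by
        rw [Finset.sum_smul]
        exact Finset.sum_congr rfl fun i _ => by
          rw [smul_smul]; ring_nf
      have e2 : (∑ i, -(a i * κ i s)) = 1 := by
        have := ha1 s
        rw [Finset.sum_neg_distrib]
        linarith
      have e3 : t s - (∑ i, a i • (-(κ i s) • t s)) = 0 := by
        rw [e1, e2, one_smul, sub_self]
      rw [e3] at h2
      exact h2
    have hfconst : ∀ s, f s = f 0 := fun s =>
      is_const_of_deriv_eq_zero (fun u => (hf' u).differentiableAt)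
        (fun u => (hf' u).deriv) s 0
    refine ⟨f 0, fun s => ?_⟩
    have hα_sub : α s - f 0 = ∑ i, a i • n i s := by
      rw [← hfconst s, hfdef]
      simp
    rw [hα_sub, edot_sum_left]
    have : ∀ i : Fin m, edot (a i • n i s) (∑ j, a j • n j s) = a i ^ 2 := by
      intro i
      rw [edot_smul_left, edot_comm, edot_sum_left]
      have : ∀ j : Fin m, edot (a j • n j s) (n i s) = if j = i then a j else 0 := by
        intro j
        rw [edot_smul_left, hnn j i s]
        split <;> simp
      rw [Finset.sum_congr rfl fun j _ => this j, Finset.sum_ite_eq' Finset.univ i a]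
      simp [sq]
    rw [Finset.sum_congr rfl fun i _ => this i, ha2]
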